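/- For every k with 0 ≤ k ≤ n, the evaluation of f_k is additive and 𝔽_p-linear: for all a, b ∈ S one has f_k.eval (a + b) = f_k.eval a + f_k.eval b, and for every scalar c ∈ 𝔽_p one has f_k.eval (c • a) = c • (f_k.eval a). -/

import Mathlib

open MvPolynomial

/-- `V p n k` : the set of `𝔽_p`-linear combinations of the first `k` variables. -/
noncomputable def V (p n k : ℕ) [Fact p.Prime] : Finset (MvPolynomial (Fin n) (ZMod p)) :=
  (Finset.univ : Finset (Fin n → ZMod p)).image
    (fun c => ∑ j ∈ Finset.univ.filter (fun j : Fin n => j.val < k), C (c j) * X j)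

/-- `f p n k = ∏_{u ∈ V_k} (X - C u)`. -/
noncomputable def f (p n k : ℕ) [Fact p.Prime] :
    Polynomial (MvPolynomial (Fin n) (ZMod p)) :=
  ∏ u ∈ V p n k, (Polynomial.X - Polynomial.C u)

/-- Dickson invariant `d_{k,i}`. -/
noncomputable def d (p n k i : ℕ) [Fact p.Prime] : MvPolynomial (Fin n) (ZMod p) :=
  (-1) ^ (k - i) * (f p n k).coeff (p ^ i)

/-- Borel generator: `hGen p n j` is `h_{j+1}` of the paper. -/
noncomputable def hGen (p n : ℕ) [Fact p.Prime] (j : Fin n) : MvPolynomial (Fin n) (ZMod p) :=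
  (Polynomial.eval (X j) (f p n j.val)) ^ (p - 1)

/-- Action of `GL_n(𝔽_p)` on `S` by linear substitution `g · y_j = ∑_i g_{ij} y_i`. -/
noncomputable def gact (p n : ℕ) [Fact p.Prime] (g : GL (Fin n) (ZMod p)) :
    MvPolynomial (Fin n) (ZMod p) →ₐ[ZMod p] MvPolynomial (Fin n) (ZMod p) :=
  aeval (fun j : Fin n => ∑ i : Fin n, C ((g : Matrix (Fin n) (Fin n) (ZMod p)) i j) * X i)

lemma keyA (p : ℕ) [Fact p.Prime] {R : Type*} [CommRing R] [IsDomain R] [Algebra (ZMod p) R]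
    (w : R) :
    ∏ c : ZMod p, (Polynomial.X - Polynomial.C (c • w)) =
      Polynomial.X ^ p - Polynomial.C (w ^ (p - 1)) * Polynomial.X := by
  have hp : p.Prime := Fact.out
  have hcard : Fintype.card (ZMod p) = p := ZMod.card p
  rcases eq_or_ne w 0 with rfl | hw
  · simp only [smul_zero, map_zero, sub_zero, Finset.prod_const, Finset.card_univ, hcard]
    rw [zero_pow (Nat.sub_ne_zero_of_lt hp.one_lt)]
    simp
  · set L : Polynomial R := ∏ c : ZMod p, (Polynomial.X - Polynomial.C (c • w)) with hL
    set Q : Polynomial R := Polynomial.X ^ p - Polynomial.C (w ^ (p - 1)) * Polynomial.X with hQ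
    have hLmonic : L.Monic := Polynomial.monic_prod_of_monic _ _ fun c _ => Polynomial.monic_X_sub_C _
    have hLdeg : L.natDegree = p := by
      rw [hL, Polynomial.natDegree_prod _ _ (fun c _ => (Polynomial.monic_X_sub_C _).ne_zero)]
      simp [Polynomial.natDegree_X_sub_C, hcard]
    have hQmonic : Q.Monic := by
      apply Polynomial.monic_X_pow_sub
      calc (Polynomial.C (w ^ (p - 1)) * Polynomial.X).degree
          ≤ 0 + 1 := by
            apply le_trans (Polynomial.degree_mul_le _ _)
            exact add_le_add Polynomial.degree_C_le Polynomial.degree_X_le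
        _ < (p : WithBot ℕ) := by
            rw [zero_add]
            exact_mod_cast hp.one_lt
    have hQdeg : Q.natDegree = p := by
      rw [hQ]
      rw [Polynomial.natDegree_sub_eq_left_of_natDegree_lt]
      · simp
      · apply lt_of_le_of_lt (Polynomial.natDegree_mul_le)
        simp [Polynomial.natDegree_X, hp.one_lt]
    by_cases hD : Q - L = 0
    · exact (sub_eq_zero.mp hD).symm
    · exfalso
      apply hD
      apply Polynomial.eq_zero_of_natDegree_lt_card_of_eval_eq_zero (Q - L)
        (f := fun c : ZMod p => c • w)
      · intro c c' hcc
        simp only at hcc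
        have h0 : (c - c') • w = 0 := by rw [sub_smul]; exact sub_eq_zero.mpr hcc
        rcases smul_eq_zero.mp h0 with h | h
        · exact sub_eq_zero.mp h
        · exact absurd h hw
      · intro c
        have hevalQ : Q.eval (c • w) = 0 := by
          rw [hQ]
          simp only [Polynomial.eval_sub, Polynomial.eval_pow, Polynomial.eval_X,
            Polynomial.eval_mul, Polynomial.eval_C]
          have h1 : (c • w) ^ p = c • w ^ p := by
            rw [smul_pow, ZMod.pow_card]
          have h2 : w ^ (p - 1) * (c • w) = c • w ^ p := by
            rw [mul_smul_comm]
            congr 1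
            rw [← pow_succ]
            congr 1
            have hple : 1 ≤ p := hp.one_le
            omega
          rw [h1, h2, sub_self]
        have hevalL : L.eval (c • w) = 0 := by
          rw [hL, Polynomial.eval_prod]
          apply Finset.prod_eq_zero (Finset.mem_univ c)
          simp
        simp [Polynomial.eval_sub, hevalQ, hevalL]
      · rw [hcard]
        have hdeg : (Q - L).degree < (p : WithBot ℕ) := by
          have := Polynomial.degree_sub_lt (p := Q) (q := L) ?_ ?_ ?_
          · rwa [Polynomial.degree_eq_natDegree hQmonic.ne_zero, hQdeg] at this
          · rw [Polynomial.degree_eq_natDegree hQmonic.ne_zero,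
              Polynomial.degree_eq_natDegree hLmonic.ne_zero, hQdeg, hLdeg]
          · exact hQmonic.ne_zero
          · rw [Polynomial.Monic.leadingCoeff hQmonic, Polynomial.Monic.leadingCoeff hLmonic]
        exact (Polynomial.natDegree_lt_iff_degree_lt hD).2 hdeg

lemma key (p : ℕ) [Fact p.Prime] {R : Type*} [CommRing R] [IsDomain R] [Algebra (ZMod p) R]
    (z w : R) : ∏ c : ZMod p, (z - c • w) = z ^ p - w ^ (p - 1) * z := by
  have := congrArg (Polynomial.eval z) (keyA p w)
  simpa [Polynomial.eval_prod] using this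

noncomputable def Wc (p n m : ℕ) [Fact p.Prime] (g : Fin m → MvPolynomial (Fin n) (ZMod p)) :
    Finset (MvPolynomial (Fin n) (ZMod p)) :=
  Finset.image (fun c : Fin m → ZMod p => ∑ j, c j • g j) Finset.univ

lemma mem_Wc {p n m : ℕ} [Fact p.Prime] {g : Fin m → MvPolynomial (Fin n) (ZMod p)}
    {x : MvPolynomial (Fin n) (ZMod p)} :
    x ∈ Wc p n m g ↔ ∃ c : Fin m → ZMod p, ∑ j, c j • g j = x := by
  simp [Wc]

lemma Wc_sub_mem {p n m : ℕ} [Fact p.Prime] {g : Fin m → MvPolynomial (Fin n) (ZMod p)}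
    {x y : MvPolynomial (Fin n) (ZMod p)} (hx : x ∈ Wc p n m g) (hy : y ∈ Wc p n m g) :
    x - y ∈ Wc p n m g := by
  obtain ⟨c, rfl⟩ := mem_Wc.mp hx
  obtain ⟨d, rfl⟩ := mem_Wc.mp hy
  exact mem_Wc.mpr ⟨fun j => c j - d j, by
    rw [← Finset.sum_sub_distrib]; exact Finset.sum_congr rfl fun j _ => by rw [sub_smul]⟩

lemma Wc_smul_mem {p n m : ℕ} [Fact p.Prime] {g : Fin m → MvPolynomial (Fin n) (ZMod p)}
    {x : MvPolynomial (Fin n) (ZMod p)} (r : ZMod p) (hx : x ∈ Wc p n m g) :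
    r • x ∈ Wc p n m g := by
  obtain ⟨c, rfl⟩ := mem_Wc.mp hx
  exact mem_Wc.mpr ⟨fun j => r * c j, by
    rw [Finset.smul_sum]; exact Finset.sum_congr rfl fun j _ => by rw [mul_smul]⟩

lemma Fc_main (p n : ℕ) [Fact p.Prime] (m : ℕ) (g : Fin m → MvPolynomial (Fin n) (ZMod p)) :
    (∀ a b, ∏ u ∈ Wc p n m g, (a + b - u)
        = (∏ u ∈ Wc p n m g, (a - u)) + ∏ u ∈ Wc p n m g, (b - u)) ∧
    (∀ (c : ZMod p) (a), ∏ u ∈ Wc p n m g, (c • a - u)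
        = c • ∏ u ∈ Wc p n m g, (a - u)) := by
  induction m with
  | zero =>
    have h0 : Wc p n 0 g = {0} := by
      ext x
      simp [mem_Wc, eq_comm]
    constructor
    · intro a b; simp [h0]
    · intro c a; simp [h0]
  | succ m IH =>
    set g' : Fin m → MvPolynomial (Fin n) (ZMod p) := fun j => g j.castSucc with hg'
    set v : MvPolynomial (Fin n) (ZMod p) := g (Fin.last m) with hv
    have hgc : ∀ j : Fin m, g j.castSucc = g' j := fun j => rfl
    have hvv : g (Fin.last m) = v := rfl
    obtain ⟨Fadd, Fsmul⟩ := IH g'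
    set F : MvPolynomial (Fin n) (ZMod p) → MvPolynomial (Fin n) (ZMod p) :=
      fun t => ∏ u ∈ Wc p n m g', (t - u) with hF
    have FA : ∀ a b, F (a + b) = F a + F b := Fadd
    have FS : ∀ (c : ZMod p) (a), F (c • a) = c • F a := Fsmul
    have F0 : F 0 = 0 := by
      have h := FA 0 0
      rw [add_zero] at h
      exact right_eq_add.mp h
    have Fneg : ∀ x, F (-x) = -F x := by
      intro x
      have h := FA x (-x)
      rw [add_neg_cancel, F0] at h
      exact (neg_eq_of_add_eq_zero_right h.symm).symm
    have Fsub : ∀ x y, F (x - y) = F x - F y := by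
      intro x y
      rw [sub_eq_add_neg, FA, Fneg, ← sub_eq_add_neg]
    by_cases hvW : v ∈ Wc p n m g'
    · have hWeq : Wc p n (m + 1) g = Wc p n m g' := by
        ext x
        rw [mem_Wc, mem_Wc]
        constructor
        · rintro ⟨c, rfl⟩
          obtain ⟨d, hd⟩ := mem_Wc.mp hvW
          refine ⟨fun j => c j.castSucc + c (Fin.last m) * d j, ?_⟩
          rw [Fin.sum_univ_castSucc]
          simp only [hgc, hvv]
          have h2 : ∑ j : Fin m, (c j.castSucc + c (Fin.last m) * d j) • g' j
              = (∑ j : Fin m, c j.castSucc • g' j) + c (Fin.last m) • ∑ j : Fin m, d j • g' j := by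
            rw [Finset.smul_sum, ← Finset.sum_add_distrib]
            exact Finset.sum_congr rfl fun j _ => by rw [add_smul, mul_smul]
          rw [h2, hd]
        · rintro ⟨c, rfl⟩
          refine ⟨Fin.snoc c 0, ?_⟩
          rw [Fin.sum_univ_castSucc]
          simp [Fin.snoc_castSucc, Fin.snoc_last, hgc]
      constructor
      · intro a b; rw [hWeq]; exact Fadd a b
      · intro c a; rw [hWeq]; exact Fsmul c a
    · have hinj : ∀ q₁ ∈ (Finset.univ : Finset (ZMod p)) ×ˢ Wc p n m g',
          ∀ q₂ ∈ (Finset.univ : Finset (ZMod p)) ×ˢ Wc p n m g',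
          q₁.1 • v + q₁.2 = q₂.1 • v + q₂.2 → q₁ = q₂ := by
        rintro ⟨e, w⟩ h1 ⟨e', w'⟩ h2 heq
        simp only [Finset.mem_product, Finset.mem_univ, true_and] at h1 h2
        simp only at heq
        by_cases hee : e = e'
        · subst hee
          have hww : w = w' := by
            have h3 := heq
            exact add_left_cancel h3
          simp [hww]
        · exfalso
          apply hvW
          have h3 : (e - e') • v = w' - w := by
            rw [sub_smul]
            linear_combination heq
          have h4 : v = (e - e')⁻¹ • (w' - w) := by
            rw [← h3, smul_smul, inv_mul_cancel₀ (sub_ne_zero.mpr hee), one_smul]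
          rw [h4]
          exact Wc_smul_mem _ (Wc_sub_mem h2 h1)
      have himg : Wc p n (m + 1) g =
          Finset.image (fun q : ZMod p × MvPolynomial (Fin n) (ZMod p) => q.1 • v + q.2)
            ((Finset.univ : Finset (ZMod p)) ×ˢ Wc p n m g') := by
        ext x
        rw [mem_Wc]
        simp only [Finset.mem_image, Finset.mem_product, Finset.mem_univ, true_and]
        constructor
        · rintro ⟨c, rfl⟩
          refine ⟨(c (Fin.last m), ∑ j : Fin m, c j.castSucc • g' j),
            mem_Wc.mpr ⟨fun j => c j.castSucc, rfl⟩, ?_⟩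
          rw [Fin.sum_univ_castSucc]
          simp only [hgc, hvv]
          ring
        · rintro ⟨⟨e, w⟩, hw, rfl⟩
          obtain ⟨d, rfl⟩ := mem_Wc.mp hw
          refine ⟨Fin.snoc d e, ?_⟩
          rw [Fin.sum_univ_castSucc]
          simp only [Fin.snoc_castSucc, Fin.snoc_last, hgc, hvv]
          ring
      have hG : ∀ t, ∏ u ∈ Wc p n (m + 1) g, (t - u) = (F t) ^ p - (F v) ^ (p - 1) * (F t) := by
        intro t
        rw [himg, Finset.prod_image hinj, Finset.prod_product]
        have hrw : ∀ e : ZMod p, ∏ w ∈ Wc p n m g', (t - (e • v + w)) = F t - e • F v := by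
          intro e
          have h1 : ∀ w : MvPolynomial (Fin n) (ZMod p), t - (e • v + w) = (t - e • v) - w := by
            intro w; ring
          calc ∏ w ∈ Wc p n m g', (t - (e • v + w))
              = ∏ w ∈ Wc p n m g', ((t - e • v) - w) :=
                Finset.prod_congr rfl fun w _ => by rw [h1]
            _ = F (t - e • v) := rfl
            _ = F t - e • F v := by rw [Fsub, FS]
        rw [Finset.prod_congr rfl fun e _ => hrw e]
        exact key p (F t) (F v)
      constructor
      · intro a b
        rw [hG, hG, hG, FA]
        rw [add_pow_char]
        ring
      · intro c a
        rw [hG, hG, FS]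
        rw [smul_pow, ZMod.pow_card, mul_smul_comm, ← smul_sub]

lemma sum_filter_lt {M : Type*} [AddCommMonoid M] {n k : ℕ} (hk : k ≤ n) (h : Fin n → M) :
    ∑ j ∈ Finset.univ.filter (fun j : Fin n => j.val < k), h j
      = ∑ j : Fin k, h (Fin.castLE hk j) :=
  Finset.sum_bij'
    (fun (j : Fin n) (hj : j ∈ Finset.univ.filter (fun j : Fin n => j.val < k)) =>
      (⟨j.val, by simpa using hj⟩ : Fin k))
    (fun (j : Fin k) (_ : j ∈ Finset.univ) => Fin.castLE hk j)
    (fun a ha => Finset.mem_univ _)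
    (fun a _ => by simp [a.isLt])
    (fun a ha => Fin.ext rfl)
    (fun a ha => Fin.ext rfl)
    (fun a ha => congrArg h (Fin.ext rfl))

/-- evaluation of `f_k` is additive and `𝔽_p`-linear. -/
theorem stmt1 (p n : ℕ) [Fact p.Prime] (k : ℕ) (hk : k ≤ n)
    (a b : MvPolynomial (Fin n) (ZMod p)) (c : ZMod p) :
    (f p n k).eval (a + b) = (f p n k).eval a + (f p n k).eval b ∧
    (f p n k).eval (c • a) = c • (f p n k).eval a := by
  have heval : ∀ t : MvPolynomial (Fin n) (ZMod p),
      (f p n k).eval t = ∏ u ∈ V p n k, (t - u) := by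
    intro t
    rw [f, Polynomial.eval_prod]
    exact Finset.prod_congr rfl fun u _ => by simp
  have hVW : V p n k = Wc p n k (fun j => X (Fin.castLE hk j)) := by
    ext x
    rw [mem_Wc]
    simp only [V, Finset.mem_image, Finset.mem_univ, true_and]
    constructor
    · rintro ⟨c', rfl⟩
      refine ⟨fun j => c' (Fin.castLE hk j), ?_⟩
      rw [sum_filter_lt hk]
      exact Finset.sum_congr rfl fun j _ => smul_eq_C_mul _ _
    · rintro ⟨c', rfl⟩
      refine ⟨fun j => if h : j.val < k then c' ⟨j.val, h⟩ else 0, ?_⟩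
      rw [sum_filter_lt hk]
      refine Finset.sum_congr rfl fun j _ => ?_
      rw [← smul_eq_C_mul]
      congr 1
      · simp
  obtain ⟨Ha, Hs⟩ := Fc_main p n k (fun j => X (Fin.castLE hk j))
  rw [heval, heval, heval, heval, hVW]
  exact ⟨Ha a b, Hs c a⟩
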